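/- Let d ≥ 1 be an integer, p ∈ (1,∞), 0 < μ ≤ d/p. Define Φ : ℝ^d → ℝ^d by Φ(x) = x·(2/max(|x|,1) − 1). Then Φ maps the closed ball B̄_{3/2} into B̄_1, Φ(x) = x for |x| ≤ 1, Φ restricted to B̄_{3/2} \\ B_1 is Lipschitz continuous with Lipschitz continuous inverse, and there is a constant N = N(d,p,μ) such that for every measurable function v on B_1 with ‖v‖_{E_{p,μ}(B_1)} < ∞, the function w(x) := v(Φ(x)) satisfies ‖w‖_{E_{p,μ}(B_{3/2})} ≤ N ‖v‖_{E_{p,μ}(B_1)}. -/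

import Mathlib

open MeasureTheory Metric Set Filter
open scoped ENNReal RealInnerProductSpace NNReal

noncomputable section

/-- Euclidean space `ℝ^d`. -/
abbrev E (d : ℕ) : Type := EuclideanSpace ℝ (Fin d)

/-- Frobenius norm of a `d × d` matrix. -/
def frob {d : ℕ} (m : Matrix (Fin d) (Fin d) ℝ) : ℝ :=
  Real.sqrt (∑ i, ∑ j, (m i j) ^ 2)

/-- `F` is `δ`-elliptic: `δ tr w ≤ F (m + w) - F m ≤ δ⁻¹ tr w` for symmetric `m` and
symmetric positive semidefinite `w`. -/
def Elliptic {d : ℕ} (δ : ℝ) (F : Matrix (Fin d) (Fin d) ℝ → ℝ) : Prop :=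
  ∀ m : Matrix (Fin d) (Fin d) ℝ, m.IsSymm →
    ∀ w : Matrix (Fin d) (Fin d) ℝ, w.PosSemidef →
      δ * w.trace ≤ F (m + w) - F m ∧ F (m + w) - F m ≤ δ⁻¹ * w.trace

/-- Gradient of `u : ℝ^d → ℝ` as a vector in `ℝ^d`. -/
def grad {d : ℕ} (u : E d → ℝ) (x : E d) : E d :=
  (EuclideanSpace.equiv (Fin d) ℝ).symm fun i => fderiv ℝ u x (EuclideanSpace.single i 1)

/-- Hessian matrix of `u : ℝ^d → ℝ`. -/
def hess {d : ℕ} (u : E d → ℝ) (x : E d) : Matrix (Fin d) (Fin d) ℝ :=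
  Matrix.of fun i j =>
    fderiv ℝ (fun y => fderiv ℝ u y (EuclideanSpace.single j 1)) x (EuclideanSpace.single i 1)

/-- Normalized `L_p` norm `(⨍_B |g|^p)^{1/p}` (average over `B`). -/
def nLp {d : ℕ} (p : ℝ) (B : Set (E d)) (g : E d → ℝ) : ℝ≥0∞ :=
  ((volume B)⁻¹ * ∫⁻ y in B, ENNReal.ofReal (|g y| ^ p)) ^ (1 / p)

/-- Unnormalized `L_p` norm `(∫_A |g|^p)^{1/p}`. -/
def Lpn {d : ℕ} (p : ℝ) (A : Set (E d)) (g : E d → ℝ) : ℝ≥0∞ :=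
  (∫⁻ y in A, ENNReal.ofReal (|g y| ^ p)) ^ (1 / p)

/-- Morrey norm `‖g‖_{E_{p,μ}(Ω)} = sup_{ρ>0, x∈Ω} ρ^μ (⨍_{B_ρ(x)} |g 1_Ω|^p)^{1/p}`. -/
def morrey {d : ℕ} (p μ : ℝ) (Ω : Set (E d)) (g : E d → ℝ) : ℝ≥0∞ :=
  ⨆ (ρ : ℝ) (_ : 0 < ρ) (x : E d) (_ : x ∈ Ω),
    ENNReal.ofReal (ρ ^ μ) * nLp p (ball x ρ) (Ω.indicator g)

/-- The `(θ, R₀)`-oscillation condition on `F(m, x)`. -/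
def OscCond {d : ℕ} (δ θ R₀ : ℝ) (F : Matrix (Fin d) (Fin d) ℝ → E d → ℝ) : Prop :=
  ∀ r ∈ Set.Ioc (0 : ℝ) R₀, ∀ z : E d,
    ∃ Fb : Matrix (Fin d) (Fin d) ℝ → ℝ,
      ConvexOn ℝ Set.univ Fb ∧ Elliptic δ Fb ∧ Fb 0 = 0 ∧
      ∀ m : Matrix (Fin d) (Fin d) ℝ, m.IsSymm → frob m = 1 →
        (volume (ball z r))⁻¹ *
            ∫⁻ x in ball z r,
              ⨆ (τ : ℝ) (_ : 0 < τ), ENNReal.ofReal (τ⁻¹ * |F (τ • m) x - Fb (τ • m)|)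
          ≤ ENNReal.ofReal θ

/-- The homogeneity bound `|F(ζ m, x)| ≤ ζ |F(m, x)| + K(x)` for `ζ ∈ [0,1]`. -/
def HomBound {d : ℕ} (F : Matrix (Fin d) (Fin d) ℝ → E d → ℝ) (K : E d → ℝ) : Prop :=
  ∀ ζ ∈ Set.Icc (0 : ℝ) 1, ∀ m : Matrix (Fin d) (Fin d) ℝ, m.IsSymm → ∀ x : E d,
    |F (ζ • m) x| ≤ ζ * |F m x| + K x

/-- The folding map `Φ(x) = x (2/(|x| ∨ 1) − 1)` used in the proof of Lemma 4.7. -/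
def foldMap (d : ℕ) : E d → E d := fun x => (2 / max ‖x‖ 1 - 1) • x

def unfoldMap (d : ℕ) : E d → E d := fun y => (2 / ‖y‖ - 1) • y

section Helpers

variable {d : ℕ}

lemma foldMap_of_norm_le {x : E d} (h : ‖x‖ ≤ 1) : foldMap d x = x := by
  simp [foldMap, max_eq_right h]
  norm_num

lemma foldMap_of_one_le {x : E d} (h : 1 ≤ ‖x‖) : foldMap d x = (2 / ‖x‖ - 1) • x := by
  simp only [foldMap, max_eq_left h]

lemma norm_foldMap_eq {x : E d} (h1 : 1 ≤ ‖x‖) (h2 : ‖x‖ ≤ 2) : ‖foldMap d x‖ = 2 - ‖x‖ := by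
  have h0 : (0:ℝ) < ‖x‖ := lt_of_lt_of_le one_pos h1
  rw [foldMap_of_one_le h1, norm_smul, Real.norm_eq_abs]
  have hnn : 0 ≤ 2 / ‖x‖ - 1 := by
    rw [sub_nonneg, le_div_iff₀ h0]; linarith
  rw [abs_of_nonneg hnn, sub_mul, div_mul_cancel₀ _ h0.ne', one_mul]

lemma normalize_lip {r : ℝ} (hr : 0 < r) {x y : E d} (hx : r ≤ ‖x‖) (hy : r ≤ ‖y‖) :
    ‖‖x‖⁻¹ • x - ‖y‖⁻¹ • y‖ ≤ 2 / r * ‖x - y‖ := by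
  have hx0 : (0:ℝ) < ‖x‖ := lt_of_lt_of_le hr hx
  have hy0 : (0:ℝ) < ‖y‖ := lt_of_lt_of_le hr hy
  have iden : ‖x‖⁻¹ • x - ‖y‖⁻¹ • y = ‖x‖⁻¹ • (x - y) + (‖x‖⁻¹ - ‖y‖⁻¹) • y := by
    rw [smul_sub, sub_smul]; abel
  rw [iden]
  have h1 : ‖‖x‖⁻¹ • (x - y)‖ ≤ r⁻¹ * ‖x - y‖ := by
    rw [norm_smul, Real.norm_eq_abs, abs_of_nonneg (inv_nonneg.2 hx0.le)]
    gcongr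
  have h2 : ‖(‖x‖⁻¹ - ‖y‖⁻¹) • y‖ ≤ r⁻¹ * ‖x - y‖ := by
    rw [norm_smul, Real.norm_eq_abs]
    have habs : |‖y‖ - ‖x‖| ≤ ‖x - y‖ := by
      rw [abs_sub_comm]; exact abs_norm_sub_norm_le x y
    have e1 : |‖x‖⁻¹ - ‖y‖⁻¹| = |‖y‖ - ‖x‖| / (‖x‖ * ‖y‖) := by
      rw [inv_sub_inv hx0.ne' hy0.ne', abs_div, abs_of_pos (mul_pos hx0 hy0)]
    rw [e1]
    have e2 : |‖y‖ - ‖x‖| / (‖x‖ * ‖y‖) * ‖y‖ = |‖y‖ - ‖x‖| / ‖x‖ := by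
      field_simp
    rw [e2]
    calc |‖y‖ - ‖x‖| / ‖x‖ ≤ ‖x - y‖ / r := by
          exact div_le_div₀ (norm_nonneg _) habs hr hx
      _ = r⁻¹ * ‖x - y‖ := by rw [div_eq_inv_mul]
  calc ‖‖x‖⁻¹ • (x - y) + (‖x‖⁻¹ - ‖y‖⁻¹) • y‖
      ≤ ‖‖x‖⁻¹ • (x - y)‖ + ‖(‖x‖⁻¹ - ‖y‖⁻¹) • y‖ := norm_add_le _ _
    _ ≤ r⁻¹ * ‖x - y‖ + r⁻¹ * ‖x - y‖ := add_le_add h1 h2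
    _ = 2 / r * ‖x - y‖ := by field_simp; ring

lemma foldAux_lip {r : ℝ} (hr : 0 < r) {x y : E d} (hx : r ≤ ‖x‖) (hy : r ≤ ‖y‖) :
    ‖(2 / ‖x‖ - 1) • x - (2 / ‖y‖ - 1) • y‖ ≤ (4 / r + 1) * ‖x - y‖ := by
  have iden : ∀ z : E d, (2 / ‖z‖ - 1) • z = (2:ℝ) • (‖z‖⁻¹ • z) - z := by
    intro z
    rw [smul_smul, sub_smul, one_smul, div_eq_mul_inv]
  have e : (2 / ‖x‖ - 1) • x - (2 / ‖y‖ - 1) • y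
      = (2:ℝ) • (‖x‖⁻¹ • x - ‖y‖⁻¹ • y) - (x - y) := by
    rw [iden, iden, smul_sub]; abel
  rw [e]
  have h1 := normalize_lip hr hx hy
  calc ‖(2:ℝ) • (‖x‖⁻¹ • x - ‖y‖⁻¹ • y) - (x - y)‖
      ≤ ‖(2:ℝ) • (‖x‖⁻¹ • x - ‖y‖⁻¹ • y)‖ + ‖x - y‖ := norm_sub_le _ _
    _ = 2 * ‖‖x‖⁻¹ • x - ‖y‖⁻¹ • y‖ + ‖x - y‖ := by
        rw [norm_smul, Real.norm_eq_abs]; norm_num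
    _ ≤ 2 * (2 / r * ‖x - y‖) + ‖x - y‖ := by nlinarith [norm_nonneg (x - y)]
    _ = (4 / r + 1) * ‖x - y‖ := by ring

lemma mem_annulus {x : E d} (h : x ∈ closedBall (0 : E d) (3/2) \ ball 0 1) :
    1 ≤ ‖x‖ ∧ ‖x‖ ≤ 3/2 := by
  constructor
  · by_contra hc
    exact h.2 (mem_ball_zero_iff.2 (not_le.1 hc))
  · exact mem_closedBall_zero_iff.1 h.1

lemma lip_fold : LipschitzOnWith 5 (foldMap d) (closedBall (0 : E d) (3/2) \ ball 0 1) := by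
  apply LipschitzOnWith.of_dist_le_mul
  intro x hx y hy
  obtain ⟨hx1, _⟩ := mem_annulus hx
  obtain ⟨hy1, _⟩ := mem_annulus hy
  rw [dist_eq_norm, dist_eq_norm, foldMap_of_one_le hx1, foldMap_of_one_le hy1]
  have h := foldAux_lip one_pos hx1 hy1
  have : ((5 : ℝ≥0) : ℝ) = 4 / 1 + 1 := by norm_num
  rw [this]
  exact h

lemma norm_unfold_dom {y : E d} (h : y ∈ foldMap d '' (closedBall (0 : E d) (3/2) \ ball 0 1)) :
    1/2 ≤ ‖y‖ := by
  obtain ⟨x, hx, rfl⟩ := h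
  obtain ⟨hx1, hx2⟩ := mem_annulus hx
  rw [norm_foldMap_eq hx1 (by linarith)]
  linarith

lemma lip_unfold :
    LipschitzOnWith 9 (unfoldMap d) (foldMap d '' (closedBall (0 : E d) (3/2) \ ball 0 1)) := by
  apply LipschitzOnWith.of_dist_le_mul
  intro a ha b hb
  have ha2 := norm_unfold_dom ha
  have hb2 := norm_unfold_dom hb
  rw [dist_eq_norm, dist_eq_norm]
  have h := foldAux_lip (by norm_num : (0:ℝ) < 1/2) ha2 hb2
  have e : ((9 : ℝ≥0) : ℝ) = 4 / (1/2) + 1 := by norm_num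
  rw [e]
  exact h

lemma unfold_foldMap {x : E d} (h1 : 1 ≤ ‖x‖) (h2 : ‖x‖ ≤ 3/2) :
    unfoldMap d (foldMap d x) = x := by
  have h0 : (0:ℝ) < ‖x‖ := lt_of_lt_of_le one_pos h1
  have hn : ‖foldMap d x‖ = 2 - ‖x‖ := norm_foldMap_eq h1 (by linarith)
  have h3 : (0:ℝ) < 2 - ‖x‖ := by linarith
  show (2 / ‖foldMap d x‖ - 1) • foldMap d x = x
  rw [hn, foldMap_of_one_le h1, smul_smul]
  have : (2 / (2 - ‖x‖) - 1) * (2 / ‖x‖ - 1) = 1 := by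
    field_simp
    ring
  rw [this, one_smul]

lemma continuous_foldMap : Continuous (foldMap d) := by
  have h1 : Continuous fun x : E d => max ‖x‖ 1 := continuous_norm.max continuous_const
  have h2 : ∀ x : E d, max ‖x‖ 1 ≠ 0 := fun x => by positivity
  exact ((continuous_const.div h1 h2).sub continuous_const).smul continuous_id

lemma volume_image_le (d : ℕ) :
    ∃ c : ℝ≥0, ∀ (K : ℝ≥0) (f : E d → E d) (s : Set (E d)), LipschitzOnWith K f s →
      ∀ t, t ⊆ s → volume (f '' t) ≤ ((c * K ^ d : ℝ≥0) : ℝ≥0∞) * volume t := by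
  have hfin : Module.finrank ℝ (E d) = d := finrank_euclideanSpace_fin
  have hH : Measure.IsAddHaarMeasure (μH[(d : ℝ)] : Measure (E d)) := by
    have h := isAddHaarMeasure_hausdorffMeasure (E := E d)
    rwa [hfin] at h
  haveI := hH
  have h1 : (volume : Measure (E d))
      = (volume : Measure (E d)).addHaarScalarFactor (μH[(d : ℝ)]) • (μH[(d : ℝ)] : Measure (E d)) :=
    Measure.isAddLeftInvariant_eq_smul _ _
  have h2 : (μH[(d : ℝ)] : Measure (E d))
      = (μH[(d : ℝ)] : Measure (E d)).addHaarScalarFactor volume • (volume : Measure (E d)) :=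
    Measure.isAddLeftInvariant_eq_smul _ _
  set c₁ := (volume : Measure (E d)).addHaarScalarFactor (μH[(d : ℝ)])
  set c₂ := (μH[(d : ℝ)] : Measure (E d)).addHaarScalarFactor volume
  refine ⟨c₁ * c₂, fun K f s hf t hts => ?_⟩
  have himg : μH[(d : ℝ)] (f '' t) ≤ (K : ℝ≥0∞) ^ (d : ℝ) * μH[(d : ℝ)] t :=
    (hf.mono hts).hausdorffMeasure_image_le (Nat.cast_nonneg d)
  calc volume (f '' t) = (c₁ : ℝ≥0∞) * μH[(d : ℝ)] (f '' t) := by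
        conv_lhs => rw [h1]
        rw [Measure.smul_apply, ENNReal.smul_def, smul_eq_mul]
    _ ≤ (c₁ : ℝ≥0∞) * ((K : ℝ≥0∞) ^ (d : ℝ) * μH[(d : ℝ)] t) := mul_le_mul_right himg _
    _ = (c₁ : ℝ≥0∞) * ((K : ℝ≥0∞) ^ (d : ℝ) * ((c₂ : ℝ≥0∞) * volume t)) := by
        congr 2
        conv_lhs => rw [h2]
        rw [Measure.smul_apply, ENNReal.smul_def, smul_eq_mul]
    _ = ((c₁ * c₂ * K ^ d : ℝ≥0) : ℝ≥0∞) * volume t := by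
        rw [ENNReal.rpow_natCast]
        push_cast
        ring

lemma lintegral_indicator_abs_rpow {d : ℕ} {p : ℝ} (hp : p ≠ 0) (g : E d → ℝ)
    (s t : Set (E d)) (ht : MeasurableSet t) :
    ∫⁻ y in s, ENNReal.ofReal (|t.indicator g y| ^ p) ∂volume
      = ∫⁻ y in t ∩ s, ENNReal.ofReal (|g y| ^ p) ∂volume := by
  have e : (fun y => ENNReal.ofReal (|t.indicator g y| ^ p))
      = t.indicator fun y => ENNReal.ofReal (|g y| ^ p) := by
    funext y
    by_cases hy : y ∈ t
    · simp [indicator_of_mem hy]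
    · simp [indicator_of_notMem hy, Real.zero_rpow hp]
  rw [e, lintegral_indicator ht, Measure.restrict_restrict ht]

lemma morrey_ball_bound {d : ℕ} {p μ : ℝ} (hp : 0 < p) (v : E d → ℝ) {x' : E d}
    (hx' : x' ∈ ball (0 : E d) 1) {σ : ℝ} (hσ : 0 < σ) :
    ∫⁻ y in ball x' σ, ENNReal.ofReal (|(ball (0 : E d) 1).indicator v y| ^ p) ∂volume ≤
      volume (ball x' σ) *
        (morrey p μ (ball (0 : E d) 1) v / ENNReal.ofReal (σ ^ μ)) ^ p := by
  set M := morrey p μ (ball (0 : E d) 1) v with hM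
  set a := ENNReal.ofReal (σ ^ μ) with ha
  set V := volume (ball x' σ) with hV
  set I := ∫⁻ y in ball x' σ, ENNReal.ofReal (|(ball (0 : E d) 1).indicator v y| ^ p) with hI
  have hterm : a * (V⁻¹ * I) ^ (1/p) ≤ M := by
    have h : a * nLp p (ball x' σ) ((ball (0 : E d) 1).indicator v) ≤ M := by
      refine le_iSup_of_le σ ?_
      refine le_iSup_of_le hσ ?_
      refine le_iSup_of_le x' ?_
      exact le_iSup_of_le hx' le_rfl
    simpa [nLp] using h
  have ha0 : a ≠ 0 := by
    simp only [ha, ne_eq, ENNReal.ofReal_eq_zero, not_le]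
    exact Real.rpow_pos_of_pos hσ μ
  have hatop : a ≠ ⊤ := ENNReal.ofReal_ne_top
  have h1 : (V⁻¹ * I) ^ (1/p) ≤ M / a :=
    (ENNReal.le_div_iff_mul_le (Or.inl ha0) (Or.inl hatop)).2 (by rwa [mul_comm])
  have h2 : V⁻¹ * I ≤ (M / a) ^ p := by
    have h := ENNReal.rpow_le_rpow h1 hp.le
    rwa [← ENNReal.rpow_mul, one_div_mul_cancel hp.ne', ENNReal.rpow_one] at h
  have hV0 : V ≠ 0 := (measure_ball_pos volume x' hσ).ne'
  have hVt : V ≠ ⊤ := measure_ball_lt_top.ne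
  calc I = V * (V⁻¹ * I) := by rw [← mul_assoc, ENNReal.mul_inv_cancel hV0 hVt, one_mul]
    _ ≤ V * (M / a) ^ p := mul_le_mul_right h2 _

end Helpers


/-- The reflection-extension estimate (4.17) inside the paper's Lemma 4.7. -/
theorem stmt_13 (d : ℕ) (hd : 1 ≤ d) (p μ : ℝ)
    (hp : 1 < p) (hμ : 0 < μ) (hμd : μ ≤ (d : ℝ) / p) :
    (∀ x ∈ closedBall (0 : E d) (3 / 2), foldMap d x ∈ closedBall (0 : E d) 1) ∧
      (∀ x : E d, ‖x‖ ≤ 1 → foldMap d x = x) ∧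
      (∃ (L₁ L₂ : NNReal) (Ψ : E d → E d),
        LipschitzOnWith L₁ (foldMap d) (closedBall (0 : E d) (3 / 2) \ ball 0 1) ∧
        LipschitzOnWith L₂ Ψ (foldMap d '' (closedBall (0 : E d) (3 / 2) \ ball 0 1)) ∧
        ∀ x ∈ closedBall (0 : E d) (3 / 2) \ ball 0 1, Ψ (foldMap d x) = x) ∧
      ∃ N : ℝ, 0 < N ∧
        ∀ v : E d → ℝ, Measurable v →
          morrey p μ (ball (0 : E d) 1) v < ⊤ →
          morrey p μ (ball (0 : E d) (3 / 2)) (fun x => v (foldMap d x)) ≤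
            ENNReal.ofReal N * morrey p μ (ball (0 : E d) 1) v := by
  have hp0 : (0:ℝ) < p := lt_trans one_pos hp
  haveI : Nontrivial (E d) := by
    refine nontrivial_of_ne (EuclideanSpace.single (⟨0, hd⟩ : Fin d) (1:ℝ)) 0 ?_
    intro h
    have h2 := congrArg (· (⟨0, hd⟩ : Fin d)) h
    simp [EuclideanSpace.single_apply] at h2
  have hfin : Module.finrank ℝ (E d) = d := finrank_euclideanSpace_fin
  refine ⟨?_, fun x hx => foldMap_of_norm_le hx, ⟨5, 9, unfoldMap d, lip_fold, lip_unfold,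
      fun x hx => unfold_foldMap (mem_annulus hx).1 (mem_annulus hx).2⟩, ?_⟩
  · -- maps closed ball 3/2 into closed ball 1
    intro x hx
    rw [mem_closedBall_zero_iff]
    by_cases h : ‖x‖ ≤ 1
    · rw [foldMap_of_norm_le h]; exact h
    · have h1 : 1 ≤ ‖x‖ := le_of_not_ge h
      have h2 : ‖x‖ ≤ 3/2 := mem_closedBall_zero_iff.1 hx
      rw [norm_foldMap_eq h1 (by linarith)]
      linarith
  · -- Morrey estimate
    obtain ⟨c, hc⟩ := volume_image_le d
    set cK : ℝ≥0 := c * 9 ^ d with hcK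
    set C : ℝ≥0 := 2 ^ d + cK * 10 ^ d with hCdef
    have hCpos : (0:ℝ) < (C : ℝ) := by
      have : (0:ℝ≥0) < C := lt_of_lt_of_le (pow_pos (by norm_num) d) le_self_add
      exact_mod_cast this
    refine ⟨(C : ℝ) ^ (1/p), Real.rpow_pos_of_pos hCpos _, ?_⟩
    intro v hv hM
    set M := morrey p μ (ball (0 : E d) 1) v with hMdef
    set w : E d → ℝ := fun y => v (foldMap d y) with hwdef
    have hΦmeas : Measurable (foldMap d) := continuous_foldMap.measurable
    have hvi : Measurable fun z : E d =>
        ENNReal.ofReal (|(ball (0 : E d) 1).indicator v z| ^ p) := by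
      apply ENNReal.measurable_ofReal.comp
      exact (Real.continuous_rpow_const hp0.le).measurable.comp
        (measurable_abs.comp (hv.indicator measurableSet_ball))
    have hCcoe : (C : ℝ≥0∞) = 2 ^ d + (cK : ℝ≥0∞) * 10 ^ d := by
      rw [hCdef]
      push_cast
      ring
    rw [show morrey p μ (ball (0 : E d) (3/2)) w
        = ⨆ (ρ : ℝ) (_ : 0 < ρ) (x : E d) (_ : x ∈ ball (0 : E d) (3/2)),
          ENNReal.ofReal (ρ ^ μ) * nLp p (ball x ρ) ((ball (0 : E d) (3/2)).indicator w)
      from rfl]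
    refine iSup_le fun ρ => iSup_le fun hρ => iSup_le fun x => iSup_le fun hx => ?_
    set a := ENNReal.ofReal (ρ ^ μ) with hadef
    have ha0 : a ≠ 0 := by
      simp only [hadef, ne_eq, ENNReal.ofReal_eq_zero, not_le]
      exact Real.rpow_pos_of_pos hρ μ
    have hatop : a ≠ ⊤ := ENNReal.ofReal_ne_top
    set Q := (M / a) ^ p with hQdef
    set V := volume (ball x ρ) with hVdef
    have hV0 : V ≠ 0 := (measure_ball_pos volume x hρ).ne'
    have hVt : V ≠ ⊤ := measure_ball_lt_top.ne
    set I := ∫⁻ y in ball x ρ,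
        ENNReal.ofReal (|(ball (0 : E d) (3/2)).indicator w y| ^ p) with hIdef
    -- the key estimate
    have hQmono : ∀ s : ℝ, 1 ≤ s → (M / ENNReal.ofReal ((s * ρ) ^ μ)) ^ p ≤ Q := by
      intro s hs
      refine ENNReal.rpow_le_rpow ?_ hp0.le
      refine ENNReal.div_le_div_left ?_ M
      apply ENNReal.ofReal_le_ofReal
      exact Real.rpow_le_rpow hρ.le (by nlinarith) hμ.le
    have hballvol : ∀ (z : E d) (s : ℝ), 1 ≤ s →
        volume (ball z (s * ρ)) = ENNReal.ofReal (s ^ d) * V := by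
      intro z s hs
      rw [hVdef, Measure.addHaar_ball volume z (by nlinarith : (0:ℝ) ≤ s * ρ),
        Measure.addHaar_ball volume x hρ.le, hfin, mul_pow,
        ENNReal.ofReal_mul (by positivity), mul_assoc]
    have key : I ≤ (C : ℝ≥0∞) * (V * Q) := by
      have stepA : I = ∫⁻ y in ball (0 : E d) (3/2) ∩ ball x ρ,
          ENNReal.ofReal (|w y| ^ p) :=
        lintegral_indicator_abs_rpow hp0.ne' w (ball x ρ) _ measurableSet_ball
      set S : Set (E d) := ball (0 : E d) (3/2) ∩ ball x ρ with hSdef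
      set S₁ : Set (E d) := S ∩ closedBall (0 : E d) 1 with hS₁def
      set S₂ : Set (E d) := S \ closedBall (0 : E d) 1 with hS₂def
      have hSm : MeasurableSet S := measurableSet_ball.inter measurableSet_ball
      have hS₁m : MeasurableSet S₁ := hSm.inter measurableSet_closedBall
      have hS₂m : MeasurableSet S₂ := hSm.diff measurableSet_closedBall
      have hsplit : ∫⁻ y in S, ENNReal.ofReal (|w y| ^ p)
          = (∫⁻ y in S₁, ENNReal.ofReal (|w y| ^ p))
            + ∫⁻ y in S₂, ENNReal.ofReal (|w y| ^ p) := by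
        rw [show S = S₁ ∪ S₂ from (inter_union_diff S _).symm]
        exact lintegral_union hS₂m (disjoint_left.mpr fun y h1 h2 => h2.2 h1.2)
      -- inner part
      have inner_le : ∫⁻ y in S₁, ENNReal.ofReal (|w y| ^ p)
          ≤ ENNReal.ofReal ((2:ℝ) ^ d) * (V * Q) := by
        have e1 : ∫⁻ y in S₁, ENNReal.ofReal (|w y| ^ p)
            = ∫⁻ y in S₁, ENNReal.ofReal (|v y| ^ p) := by
          refine setLIntegral_congr_fun hS₁m (fun y hy => ?_)
          have hy1 : ‖y‖ ≤ 1 := mem_closedBall_zero_iff.1 hy.2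
          rw [hwdef]
          simp only
          rw [foldMap_of_norm_le hy1]
        have e2 : S₁ ⊆ (ball (0 : E d) 1 ∩ ball x ρ) ∪ (sphere (0 : E d) 1 ∩ ball x ρ) := by
          intro y hy
          rcases (mem_closedBall_zero_iff.1 hy.2).lt_or_eq with h | h
          · exact Or.inl ⟨mem_ball_zero_iff.2 h, hy.1.2⟩
          · exact Or.inr ⟨mem_sphere_zero_iff_norm.2 h, hy.1.2⟩
        have base : ∫⁻ y in S₁, ENNReal.ofReal (|w y| ^ p)
            ≤ ∫⁻ y in ball (0 : E d) 1 ∩ ball x ρ, ENNReal.ofReal (|v y| ^ p) := by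
          rw [e1]
          refine le_trans (lintegral_mono_set e2) ?_
          refine le_trans (lintegral_union_le _ _ _) ?_
          have hz : ∫⁻ y in sphere (0 : E d) 1 ∩ ball x ρ,
              ENNReal.ofReal (|v y| ^ p) ∂volume = 0 :=
            setLIntegral_measure_zero _ _
              (measure_mono_null inter_subset_left (Measure.addHaar_sphere volume 0 1))
          rw [hz, add_zero]
        by_cases hne : (ball (0 : E d) 1 ∩ ball x ρ).Nonempty
        · obtain ⟨z, hz1, hz2⟩ := hne
          have hsub : ball x ρ ⊆ ball z (2 * ρ) := by
            intro y hy
            rw [mem_ball] at hy hz2 ⊢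
            have := dist_triangle y x z
            rw [dist_comm z x] at hz2
            linarith
          calc ∫⁻ y in S₁, ENNReal.ofReal (|w y| ^ p)
              ≤ ∫⁻ y in ball (0 : E d) 1 ∩ ball x ρ, ENNReal.ofReal (|v y| ^ p) := base
            _ = ∫⁻ y in ball x ρ,
                ENNReal.ofReal (|(ball (0 : E d) 1).indicator v y| ^ p) :=
              (lintegral_indicator_abs_rpow hp0.ne' v (ball x ρ) _ measurableSet_ball).symm
            _ ≤ ∫⁻ y in ball z (2 * ρ),
                ENNReal.ofReal (|(ball (0 : E d) 1).indicator v y| ^ p) :=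
              lintegral_mono_set hsub
            _ ≤ volume (ball z (2 * ρ)) * (M / ENNReal.ofReal ((2 * ρ) ^ μ)) ^ p :=
              morrey_ball_bound hp0 v hz1 (by linarith)
            _ ≤ ENNReal.ofReal ((2:ℝ) ^ d) * (V * Q) := by
              rw [hballvol z 2 one_le_two, mul_assoc]
              exact mul_le_mul_right (mul_le_mul_right (hQmono 2 one_le_two) V) _
        · have hemp : ball (0 : E d) 1 ∩ ball x ρ = ∅ := not_nonempty_iff_eq_empty.1 hne
          refine le_trans base ?_
          rw [hemp]
          simp
      -- outer part
      have outer_le : ∫⁻ y in S₂, ENNReal.ofReal (|w y| ^ p)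
          ≤ (cK : ℝ≥0∞) * (ENNReal.ofReal ((10:ℝ) ^ d) * (V * Q)) := by
        by_cases hne : S₂.Nonempty
        · obtain ⟨y₀, hy₀⟩ := hne
          have hDmem : ∀ y ∈ S₂, y ∈ closedBall (0 : E d) (3/2) \ ball 0 1 := by
            intro y hy
            exact ⟨ball_subset_closedBall hy.1.1, fun hb => hy.2 (ball_subset_closedBall hb)⟩
          have hnorm : ∀ y ∈ S₂, 1 < ‖y‖ ∧ ‖y‖ < 3/2 := by
            intro y hy
            constructor
            · by_contra hcon
              exact hy.2 (mem_closedBall_zero_iff.2 (not_lt.1 hcon))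
            · exact mem_ball_zero_iff.1 hy.1.1
          obtain ⟨hy₀1, hy₀2⟩ := hnorm y₀ hy₀
          set x'' := foldMap d y₀ with hx''def
          have hx'' : x'' ∈ ball (0 : E d) 1 := by
            rw [mem_ball_zero_iff, hx''def, norm_foldMap_eq hy₀1.le (by linarith)]
            linarith
          have himgball : ∀ y ∈ S₂, foldMap d y ∈ ball x'' (10 * ρ) := by
            intro y hy
            have hlip := lip_fold.dist_le_mul y (hDmem y hy) y₀ (hDmem y₀ hy₀)
            have hdyy : dist y y₀ < 2 * ρ := by
              have h1 : dist y x < ρ := mem_ball.1 hy.1.2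
              have h2 : dist y₀ x < ρ := mem_ball.1 hy₀.1.2
              have := dist_triangle y x y₀
              rw [dist_comm x y₀] at this
              linarith
            rw [mem_ball]
            have h5 : ((5 : ℝ≥0) : ℝ) = 5 := by norm_num
            rw [h5] at hlip
            nlinarith [dist_nonneg (x := y) (y := y₀)]
          have hΦB1 : ∀ y ∈ S₂, foldMap d y ∈ ball (0 : E d) 1 := by
            intro y hy
            obtain ⟨h1, h2⟩ := hnorm y hy
            rw [mem_ball_zero_iff, norm_foldMap_eq h1.le (by linarith)]
            linarith
          have e1 : ∫⁻ y in S₂, ENNReal.ofReal (|w y| ^ p)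
              = ∫⁻ y in S₂, (fun z : E d =>
                  ENNReal.ofReal (|(ball (0 : E d) 1).indicator v z| ^ p)) (foldMap d y) := by
            refine setLIntegral_congr_fun hS₂m (fun y hy => ?_)
            simp only
            rw [indicator_of_mem (hΦB1 y hy)]
          have hle : Measure.map (foldMap d) (volume.restrict S₂)
              ≤ (cK : ℝ≥0∞) • volume.restrict (ball x'' (10 * ρ)) := by
            rw [Measure.le_iff]
            intro T hT
            rw [Measure.map_apply hΦmeas hT, Measure.restrict_apply (hΦmeas hT),
              Measure.smul_apply, Measure.restrict_apply hT, smul_eq_mul]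
            have hsub : foldMap d ⁻¹' T ∩ S₂ ⊆ unfoldMap d ''
                ((T ∩ ball x'' (10 * ρ)) ∩
                  (foldMap d '' (closedBall (0 : E d) (3/2) \ ball 0 1))) := by
              intro y hy
              obtain ⟨h1, h2⟩ := hnorm y hy.2
              exact ⟨foldMap d y,
                ⟨⟨hy.1, himgball y hy.2⟩, mem_image_of_mem _ (hDmem y hy.2)⟩,
                unfold_foldMap h1.le h2.le⟩
            calc volume (foldMap d ⁻¹' T ∩ S₂)
                ≤ volume (unfoldMap d ''
                  ((T ∩ ball x'' (10 * ρ)) ∩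
                    (foldMap d '' (closedBall (0 : E d) (3/2) \ ball 0 1)))) :=
                measure_mono hsub
              _ ≤ ((c * 9 ^ d : ℝ≥0) : ℝ≥0∞) *
                  volume ((T ∩ ball x'' (10 * ρ)) ∩
                    (foldMap d '' (closedBall (0 : E d) (3/2) \ ball 0 1))) :=
                hc 9 (unfoldMap d) _ lip_unfold _ inter_subset_right
              _ ≤ (cK : ℝ≥0∞) * volume (T ∩ ball x'' (10 * ρ)) := by
                rw [hcK]
                exact mul_le_mul_right (measure_mono inter_subset_left) _
          calc ∫⁻ y in S₂, ENNReal.ofReal (|w y| ^ p)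
              = ∫⁻ z, (fun z : E d =>
                  ENNReal.ofReal (|(ball (0 : E d) 1).indicator v z| ^ p)) z
                  ∂(Measure.map (foldMap d) (volume.restrict S₂)) := by
                rw [e1, lintegral_map hvi hΦmeas]
            _ ≤ ∫⁻ z, (fun z : E d =>
                  ENNReal.ofReal (|(ball (0 : E d) 1).indicator v z| ^ p)) z
                  ∂((cK : ℝ≥0∞) • volume.restrict (ball x'' (10 * ρ))) :=
                lintegral_mono' hle le_rfl
            _ = (cK : ℝ≥0∞) * ∫⁻ z in ball x'' (10 * ρ),
                  ENNReal.ofReal (|(ball (0 : E d) 1).indicator v z| ^ p) :=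
                lintegral_smul_measure _ _
            _ ≤ (cK : ℝ≥0∞) * (volume (ball x'' (10 * ρ))
                  * (M / ENNReal.ofReal ((10 * ρ) ^ μ)) ^ p) :=
                mul_le_mul_right (morrey_ball_bound hp0 v hx'' (by linarith)) _
            _ ≤ (cK : ℝ≥0∞) * (ENNReal.ofReal ((10:ℝ) ^ d) * (V * Q)) := by
                refine mul_le_mul_right ?_ _
                rw [hballvol x'' 10 (by norm_num), mul_assoc]
                exact mul_le_mul_right
                  (mul_le_mul_right (hQmono 10 (by norm_num)) V) _
        · have hemp : S₂ = ∅ := not_nonempty_iff_eq_empty.1 hne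
          rw [hemp]
          simp
      have hofReal2 : ENNReal.ofReal ((2:ℝ) ^ d) = (2:ℝ≥0∞) ^ d := by
        rw [ENNReal.ofReal_pow (by norm_num)]
        norm_num
      have hofReal10 : ENNReal.ofReal ((10:ℝ) ^ d) = (10:ℝ≥0∞) ^ d := by
        rw [ENNReal.ofReal_pow (by norm_num)]
        norm_num
      calc I = (∫⁻ y in S₁, ENNReal.ofReal (|w y| ^ p))
            + ∫⁻ y in S₂, ENNReal.ofReal (|w y| ^ p) := by rw [stepA, hsplit]
        _ ≤ ENNReal.ofReal ((2:ℝ) ^ d) * (V * Q)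
            + (cK : ℝ≥0∞) * (ENNReal.ofReal ((10:ℝ) ^ d) * (V * Q)) :=
          add_le_add inner_le outer_le
        _ = (C : ℝ≥0∞) * (V * Q) := by
          rw [hofReal2, hofReal10, hCcoe]
          ring
    -- conclude
    have hstep : V⁻¹ * I ≤ (C : ℝ≥0∞) * Q := by
      calc V⁻¹ * I ≤ V⁻¹ * ((C : ℝ≥0∞) * (V * Q)) := mul_le_mul_right key _
        _ = (V⁻¹ * V) * ((C : ℝ≥0∞) * Q) := by ring
        _ = (C : ℝ≥0∞) * Q := by rw [ENNReal.inv_mul_cancel hV0 hVt, one_mul]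
    have hQroot : Q ^ (1/p) = M / a := by
      rw [hQdef, ← ENNReal.rpow_mul, mul_one_div, div_self hp0.ne', ENNReal.rpow_one]
    calc a * nLp p (ball x ρ) ((ball (0 : E d) (3/2)).indicator w)
        = a * (V⁻¹ * I) ^ (1/p) := rfl
      _ ≤ a * ((C : ℝ≥0∞) * Q) ^ (1/p) :=
        mul_le_mul_right (ENNReal.rpow_le_rpow hstep (by positivity)) _
      _ = a * ((C : ℝ≥0∞) ^ (1/p) * (M / a)) := by
        rw [ENNReal.mul_rpow_of_nonneg _ _ (by positivity : (0:ℝ) ≤ 1/p), hQroot]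
      _ = (C : ℝ≥0∞) ^ (1/p) * (a * (M / a)) := by ring
      _ = (C : ℝ≥0∞) ^ (1/p) * M := by rw [ENNReal.mul_div_cancel ha0 hatop]
      _ = ENNReal.ofReal ((C : ℝ) ^ (1/p)) * M := by
        rw [← ENNReal.ofReal_coe_nnreal, ENNReal.ofReal_rpow_of_pos hCpos]
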